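/- Let G be a connected simple graph on vertex set Fin n (n ≥ 1) with real Laplacian matrix L. Then there exists a real n×n matrix X satisfying the Penrose conditions L·X·L = L, X·L·X = X, (L·X)ᵀ = L·X, (X·L)ᵀ = X·L, and moreover L·X = X·L = I_n − (1/n)·J, where J is the n×n all-ones matrix. -/

import Mathlib

open Matrix

/-- For a connected simple graph `G` on `Fin n` (`n ≥ 1`) with real
Laplacian `L`, there exists a Moore–Penrose generalized inverse `X` of `L`
(satisfying the four Penrose conditions) with
`L·X = X·L = I − (1/n)·J`, where `J` is the all-ones matrix. -/
theorem lapMatrix_moore_penrose_inverse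
    (n : ℕ) (hn : 1 ≤ n) (G : SimpleGraph (Fin n)) [DecidableRel G.Adj]
    (hG : G.Connected) :
    ∃ X : Matrix (Fin n) (Fin n) ℝ,
      G.lapMatrix ℝ * X * G.lapMatrix ℝ = G.lapMatrix ℝ ∧
      X * G.lapMatrix ℝ * X = X ∧
      (G.lapMatrix ℝ * X)ᵀ = G.lapMatrix ℝ * X ∧
      (X * G.lapMatrix ℝ)ᵀ = X * G.lapMatrix ℝ ∧
      G.lapMatrix ℝ * X
        = 1 - (1 / (n : ℝ)) • (Matrix.of fun _ _ => (1 : ℝ)) ∧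
      X * G.lapMatrix ℝ
        = 1 - (1 / (n : ℝ)) • (Matrix.of fun _ _ => (1 : ℝ)) := by
  have hn0 : (n : ℝ) ≠ 0 := by positivity
  set L : Matrix (Fin n) (Fin n) ℝ := G.lapMatrix ℝ with hL
  set J : Matrix (Fin n) (Fin n) ℝ := Matrix.of fun _ _ => (1 : ℝ) with hJ
  set c : ℝ := 1 / (n : ℝ) with hc
  have hcn : c * n = 1 := by rw [hc]; field_simp
  -- basic algebra of J and L
  have hLJ : L * J = 0 := by
    ext i j
    have := congrFun (G.lapMatrix_mulVec_const_eq_zero (R := ℝ)) i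
    simpa [Matrix.mul_apply, mulVec, dotProduct, hJ] using this
  have hJL : J * L = 0 := by
    have := congrArg Matrix.transpose hLJ
    have hsym : Lᵀ = L := G.isSymm_lapMatrix (R := ℝ)
    simpa [Matrix.transpose_mul, hsym, show Jᵀ = J by ext i j; simp [hJ], Matrix.transpose_zero] using this
  have hJJ : J * J = (n : ℝ) • J := by
    ext i j
    simp [Matrix.mul_apply, hJ]
  set M : Matrix (Fin n) (Fin n) ℝ := L + c • J with hM
  -- M is positive definite
  have hMpd : M.PosDef := by
    refine Matrix.PosDef.of_dotProduct_mulVec_pos ?_ ?_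
    · have hsym : Lᵀ = L := G.isSymm_lapMatrix (R := ℝ)
      have hJsym : Jᵀ = J := by ext i j; simp [hJ]
      simp only [Matrix.IsHermitian, conjTranspose_eq_transpose_of_trivial, hM,
        Matrix.transpose_add, Matrix.transpose_smul, hsym, hJsym]
    · intro x hx
      have hq : (0:ℝ) ≤ x ⬝ᵥ L *ᵥ x := by
        have := (G.posSemidef_lapMatrix ℝ).dotProduct_mulVec_nonneg x
        simpa using this
      have hJx : x ⬝ᵥ (J *ᵥ x) = (∑ i, x i) * (∑ i, x i) := by
        simp [mulVec, dotProduct, hJ, Finset.sum_mul, mul_comm]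
      have hsplit : star x ⬝ᵥ M *ᵥ x = x ⬝ᵥ L *ᵥ x + c * ((∑ i, x i) * (∑ i, x i)) := by
        simp [hM, add_mulVec, dotProduct_add, smul_mulVec, dotProduct_smul, hJx,
          smul_eq_mul]
      rw [hsplit]
      rcases eq_or_ne (∑ i, x i) 0 with hs | hs
      · have hq' : x ⬝ᵥ L *ᵥ x ≠ 0 := by
          intro h0
          have : ∀ i j : Fin n, G.Reachable i j → x i = x j := by
            rw [← G.lapMatrix_toLinearMap₂'_apply'_eq_zero_iff_forall_reachable]
            simpa [Matrix.toLinearMap₂'_apply'] using h0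
          have hconst : ∀ i : Fin n, x i = x ⟨0, hn⟩ :=
            fun i => this i ⟨0, hn⟩ (hG.preconnected i ⟨0, hn⟩)
          have hsum : (∑ i, x i) = (n : ℝ) * x ⟨0, hn⟩ := by
            rw [Finset.sum_congr rfl (fun i _ => hconst i)]
            simp [mul_comm]
          have hx0 : x ⟨0, hn⟩ = 0 := by
            have := hs; rw [hsum] at this
            exact (mul_eq_zero.mp this).resolve_left hn0
          exact hx (funext fun i => by simp [hconst i, hx0])
        have : 0 < x ⬝ᵥ L *ᵥ x := lt_of_le_of_ne hq (Ne.symm hq')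
        simpa [hs] using this
      · have hc0 : 0 < c := by rw [hc]; positivity
        have hpos : 0 < c * ((∑ i, x i) * (∑ i, x i)) :=
          mul_pos hc0 (mul_self_pos.mpr hs)
        linarith
  have hMunit : IsUnit M := hMpd.isUnit
  have hMMinv : M * M⁻¹ = 1 := Matrix.mul_nonsing_inv M ((Matrix.isUnit_iff_isUnit_det M).mp hMunit)
  have hMinvM : M⁻¹ * M = 1 := Matrix.nonsing_inv_mul M ((Matrix.isUnit_iff_isUnit_det M).mp hMunit)
  -- M * J = J and J * M = J
  have hMJ : M * J = J := by
    rw [hM, Matrix.add_mul, hLJ, Matrix.smul_mul, hJJ, smul_smul, hcn, one_smul, zero_add]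
  have hJM : J * M = J := by
    rw [hM, Matrix.mul_add, hJL, Matrix.mul_smul, hJJ, smul_smul, hcn, one_smul, zero_add]
  have hMinvJ : M⁻¹ * J = J := by
    calc M⁻¹ * J = M⁻¹ * (M * J) := by rw [hMJ]
    _ = (M⁻¹ * M) * J := by rw [Matrix.mul_assoc]
    _ = J := by rw [hMinvM, Matrix.one_mul]
  have hJMinv : J * M⁻¹ = J := by
    calc J * M⁻¹ = (J * M) * M⁻¹ := by rw [hJM]
    _ = J * (M * M⁻¹) := by rw [Matrix.mul_assoc]
    _ = J := by rw [hMMinv, Matrix.mul_one]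
  set X : Matrix (Fin n) (Fin n) ℝ := M⁻¹ - c • J with hX
  have hLeq : L = M - c • J := by rw [hM]; abel
  -- L * X = 1 - c • J
  have hLX : L * X = 1 - c • J := by
    rw [hLeq, hX]
    rw [Matrix.sub_mul, Matrix.mul_sub, Matrix.mul_sub]
    rw [hMMinv, Matrix.mul_smul, hMJ, Matrix.smul_mul, hJMinv, Matrix.smul_mul,
      Matrix.mul_smul, hJJ]
    have hccn : c * c * (n:ℝ) = c := by rw [mul_assoc, hcn, mul_one]
    rw [smul_smul, smul_smul, hccn]
    abel
  have hXL : X * L = 1 - c • J := by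
    rw [hLeq, hX]
    rw [Matrix.mul_sub, Matrix.sub_mul, Matrix.sub_mul]
    rw [hMinvM, Matrix.mul_smul, hMinvJ, Matrix.smul_mul, hJM, Matrix.smul_mul,
      Matrix.mul_smul, hJJ]
    have hccn : c * c * (n:ℝ) = c := by rw [mul_assoc, hcn, mul_one]
    rw [smul_smul, smul_smul, hccn]
    abel
  have hJX : J * X = 0 := by
    rw [hX, Matrix.mul_sub, hJMinv, Matrix.mul_smul, hJJ, smul_smul, hcn, one_smul, sub_self]
  refine ⟨X, ?_, ?_, ?_, ?_, hLX, hXL⟩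
  · rw [hLX, Matrix.sub_mul, Matrix.one_mul, Matrix.smul_mul, hJL, smul_zero, sub_zero]
  · have hXJ : X * J = 0 := by
      rw [hX, Matrix.sub_mul, hMinvJ, Matrix.smul_mul, hJJ, smul_smul, hcn, one_smul, sub_self]
    rw [Matrix.mul_assoc, hLX, Matrix.mul_sub, Matrix.mul_one, Matrix.mul_smul, hXJ,
      smul_zero, sub_zero]
  · rw [hLX]
    ext i j; simp [Matrix.transpose_apply, Matrix.one_apply, hJ, eq_comm]
  · rw [hXL]
    ext i j; simp [Matrix.transpose_apply, Matrix.one_apply, hJ, eq_comm]
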